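/- Let h, u be positive integers with u prime and h ≤ u, and let H be a positive integer. Suppose χ is a Dirichlet character modulo a prime p such that χ(n) = 1 for all integers n ∈ [1,H] with gcd(n,u) = 1. Let q, t be integers with 0 ≤ t < q and gcd(q,u) = 1, and let z be an integer lying in I*(q,t) ∪ J*(q,t), where I*(q,t) = ( p·t/q , (H + p·t)/q − h ] and J*(q,t) = [ −(H + p·t)/q , −p·t/q − h ). Then | Σ_{m=0}^{h−1} χ(z+m) | ≥ h − 2. -/

import Mathlib

theorem char_sum_almost_constant (h u : ℕ) (hh : 0 < h) (hu : u.Prime) (hhu : h ≤ u)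
    (p : ℕ) [Fact p.Prime]
    (χ : DirichletCharacter ℂ p)
    (H : ℕ) (hH : 0 < H)
    (hres : ∀ n : ℕ, 1 ≤ n → n ≤ H → Nat.gcd n u = 1 → χ (n : ZMod p) = 1)
    (q t : ℤ) (ht : 0 ≤ t) (htq : t < q) (hqu : Int.gcd q (u : ℤ) = 1)
    (z : ℤ)
    (hz : (z : ℝ) ∈ Set.Ioc ((p : ℝ) * (t : ℝ) / (q : ℝ))
            (((H : ℝ) + (p : ℝ) * (t : ℝ)) / (q : ℝ) - (h : ℝ)) ∨
          (z : ℝ) ∈ Set.Ico (-(((H : ℝ) + (p : ℝ) * (t : ℝ)) / (q : ℝ)))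
            (-((p : ℝ) * (t : ℝ) / (q : ℝ)) - (h : ℝ))) :
    (h : ℝ) - 2 ≤ ‖∑ m ∈ Finset.range h, χ ((z : ZMod p) + (m : ZMod p))‖ := by
  have hq0 : 0 < q := lt_of_le_of_lt ht htq
  have hq0' : (0:ℝ) < (q:ℝ) := by exact_mod_cast hq0
  obtain ⟨ε, hε, hbound⟩ : ∃ ε : ℤ, (ε = 1 ∨ ε = -1) ∧ ∀ m : ℕ, m < h →
      1 ≤ ε*(q*(z+m)) - p*t ∧ ε*(q*(z+m)) - p*t ≤ H := by
    rcases hz with ⟨h1, h2⟩ | ⟨h1, h2⟩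
    · refine ⟨1, Or.inl rfl, ?_⟩
      have A : (p:ℝ)*t < z*q := (div_lt_iff₀ hq0').mp h1
      have B : ((z:ℝ)+h)*q ≤ H + p*t := by
        rw [← le_div_iff₀ hq0']; linarith
      have A' : (p:ℤ)*t < z*q := by exact_mod_cast A
      have B' : (z+(h:ℤ))*q ≤ H + p*t := by exact_mod_cast B
      intro m hm
      have hm' : (m:ℤ) < (h:ℤ) := by exact_mod_cast hm
      have hm0 : (0:ℤ) ≤ m := Int.natCast_nonneg m
      constructor <;> nlinarith
    · refine ⟨-1, Or.inr rfl, ?_⟩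
      have A : -((H:ℝ) + p*t) ≤ (z:ℝ)*q := by
        rw [← neg_div] at h1; exact (div_le_iff₀ hq0').mp h1
      have B : ((z:ℝ)+h)*q < -((p:ℝ)*t) := by
        rw [← lt_div_iff₀ hq0', neg_div]; linarith
      have A' : -((H:ℤ) + p*t) ≤ z*q := by exact_mod_cast A
      have B' : (z+(h:ℤ))*q < -((p:ℤ)*t) := by exact_mod_cast B
      intro m hm
      have hm' : (m:ℤ) < (h:ℤ) := by exact_mod_cast hm
      have hm0 : (0:ℤ) ≤ m := Int.natCast_nonneg m
      constructor <;> nlinarith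
  classical
  set f : ℕ → ℂ := fun m => χ ((z : ZMod p) + (m : ZMod p)) with hf
  set n : ℕ → ℤ := fun m => ε*(q*(z+m)) - p*t with hn
  set N : ℕ → ℕ := fun m => (n m).toNat with hN
  have hNn : ∀ m, m < h → ((N m : ℤ)) = n m := fun m hm =>
    Int.toNat_of_nonneg (le_trans one_pos.le (hbound m hm).1)
  set a : ℂ := χ (((ε*q : ℤ) : ZMod p)) with ha
  have hkey : ∀ m, m < h → χ ((N m : ZMod p)) = a * f m := by
    intro m hm
    have h1 : ((N m : ℤ) : ZMod p) = ((n m : ℤ) : ZMod p) := by rw [hNn m hm]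
    rw [hn] at h1
    push_cast at h1
    have h2 : ((N m : ℕ) : ZMod p) = ((ε*q : ℤ) : ZMod p) * ((z : ZMod p) + (m : ZMod p)) := by
      push_cast
      rw [h1]
      simp [ZMod.natCast_self]
      ring
    rw [h2, map_mul]
  set S : Finset ℕ := (Finset.range h).filter (fun m => ¬ u ∣ N m) with hS
  have hgood : ∀ m ∈ S, a * f m = 1 := by
    intro m hm
    rw [hS, Finset.mem_filter, Finset.mem_range] at hm
    obtain ⟨hmh, hmd⟩ := hm
    have e1 := hNn m hmh
    have e2 : 1 ≤ n m := (hbound m hmh).1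
    have e3 : n m ≤ H := (hbound m hmh).2
    have h1 : 1 ≤ N m := by omega
    have h2 : N m ≤ H := by omega
    have h3 : Nat.gcd (N m) u = 1 :=
      Nat.coprime_comm.mp ((Nat.Prime.coprime_iff_not_dvd hu).mpr hmd)
    have := hres (N m) h1 h2 h3
    rwa [hkey m hmh] at this
  have hcard : ((Finset.range h) \ S).card ≤ 1 := by
    rw [Finset.card_le_one]
    intro m hm m' hm'
    rw [Finset.mem_sdiff, Finset.mem_range, hS, Finset.mem_filter] at hm hm'
    have hmh : m < h := hm.1
    have hmh' : m' < h := hm'.1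
    have hdm : u ∣ N m := by
      by_contra hc; exact hm.2 ⟨Finset.mem_range.mpr hmh, hc⟩
    have hdm' : u ∣ N m' := by
      by_contra hc; exact hm'.2 ⟨Finset.mem_range.mpr hmh', hc⟩
    have d1 : (u:ℤ) ∣ n m := by rw [← hNn m hmh]; exact_mod_cast hdm
    have d2 : (u:ℤ) ∣ n m' := by rw [← hNn m' hmh']; exact_mod_cast hdm'
    have d3 : (u:ℤ) ∣ (ε * q) * ((m:ℤ) - m') := by
      have e : n m - n m' = (ε * q) * ((m:ℤ) - m') := by rw [hn]; ring
      rw [← e]; exact dvd_sub d1 d2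
    have hup : Prime (u:ℤ) := Nat.prime_iff_prime_int.mp hu
    have hndvd : ¬ (u:ℤ) ∣ q := by
      intro hd
      have h1 : u ∣ q.natAbs := by
        have := Int.natAbs_dvd_natAbs.mpr hd; simpa using this
      have h2 : u ∣ Int.gcd q (u:ℤ) := Nat.dvd_gcd h1 (by simp)
      rw [hqu] at h2
      have := Nat.le_of_dvd one_pos h2
      have := hu.one_lt
      omega
    have hndvd2 : ¬ (u:ℤ) ∣ ε * q := by
      rcases hε with rfl | rfl <;> simpa using hndvd
    have d4 : (u:ℤ) ∣ (m:ℤ) - m' := ((hup.dvd_mul).mp d3).resolve_left hndvd2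
    have d5 : u ∣ ((m:ℤ) - m').natAbs := by
      have := Int.natAbs_dvd_natAbs.mpr d4; simpa using this
    have d6 : ((m:ℤ) - m').natAbs < u := by omega
    have := Nat.eq_zero_of_dvd_of_lt d5 d6
    omega
  have hsub : S ⊆ Finset.range h := Finset.filter_subset _ _
  have hcards : S.card + ((Finset.range h) \ S).card = h := by
    rw [Finset.card_sdiff_of_subset hsub, Finset.card_range]
    have := Finset.card_le_card hsub
    rw [Finset.card_range] at this
    omega
  by_cases hSne : S.Nonempty
  · obtain ⟨m₀, hm₀⟩ := hSne
    set c : ℂ := f m₀ with hc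
    have hac : a * c = 1 := hgood m₀ hm₀
    have ha0 : a ≠ 0 := left_ne_zero_of_mul_eq_one hac
    have hfc : ∀ m ∈ S, f m = c := fun m hm => mul_left_cancel₀ ha0 ((hgood m hm).trans hac.symm)
    have hnc : ‖c‖ = 1 := by
      have h1 : ‖a‖ * ‖c‖ = 1 := by rw [← norm_mul, hac, norm_one]
      have h2 : ‖a‖ ≤ 1 := χ.norm_le_one _
      have h3 : ‖c‖ ≤ 1 := χ.norm_le_one _
      nlinarith [norm_nonneg a, norm_nonneg c]
    have e1 : ∑ m ∈ S, f m = (S.card : ℂ) * c := by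
      rw [Finset.sum_congr rfl hfc, Finset.sum_const, nsmul_eq_mul]
    have e2 : ‖∑ m ∈ S, f m‖ = (S.card : ℝ) := by
      rw [e1, norm_mul, hnc, mul_one]; simp
    have e3 : ‖∑ m ∈ (Finset.range h) \ S, f m‖ ≤ 1 := by
      calc ‖∑ m ∈ (Finset.range h) \ S, f m‖ ≤ ∑ m ∈ (Finset.range h) \ S, ‖f m‖ :=
            norm_sum_le _ _
        _ ≤ ∑ m ∈ (Finset.range h) \ S, (1:ℝ) :=
            Finset.sum_le_sum (fun m _ => χ.norm_le_one _)
        _ = ((Finset.range h \ S).card : ℝ) := by simp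
        _ ≤ 1 := by exact_mod_cast hcard
    have esum : ∑ m ∈ Finset.range h, f m
        = (∑ m ∈ S, f m) + ∑ m ∈ (Finset.range h) \ S, f m := by
      rw [add_comm, Finset.sum_sdiff hsub]
    have hge : (S.card : ℝ) - 1 ≤ ‖∑ m ∈ Finset.range h, f m‖ := by
      rw [esum]
      have := norm_sub_norm_le (∑ m ∈ S, f m) (-(∑ m ∈ (Finset.range h) \ S, f m))
      rw [norm_neg, sub_neg_eq_add] at this
      rw [e2] at this
      linarith
    have hn' : h ≤ S.card + 1 := by omega
    have hScard : (h:ℝ) ≤ (S.card : ℝ) + 1 := by exact_mod_cast hn'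
    linarith
  · rw [Finset.not_nonempty_iff_eq_empty] at hSne
    have hh1 : h ≤ 1 := by
      rw [hSne] at hcard
      simpa using hcard
    have : (h:ℝ) ≤ 1 := by exact_mod_cast hh1
    have := norm_nonneg (∑ m ∈ Finset.range h, f m)
    linarith
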